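/- For any fixed p ∈ (0,1) and dimension d ≥ 1, the total variation distance between the Erdős–Rényi graph G(n,p) and the noisy random geometric graph G(n,p,d,q) is at most (1/2)·n·q, for all 0 ≤ q ≤ 1/2. -/

import Mathlib

open MeasureTheory ProbabilityTheory Real
section AuxLemmas

lemma aux_log_lb {x : ℝ} (hx : 0 ≤ x) : x - x^2 ≤ Real.log (1+x) := by
  have h1 : (0:ℝ) < 1 + x := by linarith
  have h2 := Real.log_le_sub_one_of_pos (inv_pos.mpr h1)
  rw [Real.log_inv] at h2
  have h3 : (1+x) * (1+x)⁻¹ = 1 := mul_inv_cancel₀ h1.ne'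
  nlinarith [pow_nonneg hx 3, sq_nonneg x]

lemma aux_neg_log {x : ℝ} (h0 : 0 ≤ x) (h : x ≤ 1/2) : -Real.log (1-x) ≤ x + x^2 := by
  have hlt : |x| < 1 := by rw [abs_of_nonneg h0]; linarith
  have := (abs_le.mp (Real.abs_log_sub_add_sum_range_le hlt 4)).1
  simp only [Finset.sum_range_succ, Finset.sum_range_zero, abs_of_nonneg h0] at this
  norm_num at this
  -- this : -(x^5/(1-x)) ≤ x + x^2/2 + x^3/3 + x^4/4 + log(1-x)
  have hx1 : (0:ℝ) < 1 - x := by linarith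
  have h5 : x^5/(1-x) ≤ 2*x^5 := by
    rw [div_le_iff₀ hx1]; nlinarith [pow_nonneg h0 5]
  have e3 : x^3 ≤ x^2 * (1/2) := by nlinarith [sq_nonneg x]
  have e4 : x^4 ≤ x^2 * (1/4) := by nlinarith [sq_nonneg x, sq_nonneg (x^2)]
  have e5 : x^5 ≤ x^2 * (1/8) := by nlinarith [pow_nonneg h0 3, sq_nonneg x]
  linarith [sq_nonneg x]

lemma pinsker_deriv (a : ℝ) {y : ℝ} (hy0 : 0 < y) (hy1 : y < 1) :
    HasDerivAt (fun y : ℝ => -(a * Real.log y) - (1-a) * Real.log (1-y) - 2*(a-y)^2)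
      ((y - a) * (1/(y*(1-y)) - 4)) y := by
  have h1 : HasDerivAt (fun y : ℝ => a * Real.log y) (a * y⁻¹) y :=
    (Real.hasDerivAt_log hy0.ne').const_mul a
  have h2 : HasDerivAt (fun y : ℝ => 1 - y) (-1) y := by
    simpa using (hasDerivAt_id y).const_sub 1
  have h3 : HasDerivAt (fun y : ℝ => Real.log (1-y)) ((1-y)⁻¹ * (-1)) y :=
    (Real.hasDerivAt_log (by linarith : (1:ℝ)-y ≠ 0)).comp y h2
  have h4 : HasDerivAt (fun y : ℝ => (1-a) * Real.log (1-y)) ((1-a) * ((1-y)⁻¹ * (-1))) y :=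
    h3.const_mul (1-a)
  have h5 : HasDerivAt (fun y : ℝ => a - y) (-1) y := by
    simpa using (hasDerivAt_id y).const_sub a
  have h6 : HasDerivAt (fun y : ℝ => 2*(a-y)^2) (2 * (2*(a-y)^1 * (-1))) y :=
    (h5.pow 2).const_mul 2
  have := ((h1.neg).sub h4).sub h6
  refine this.congr_deriv ?_
  have hyne : y ≠ 0 := hy0.ne'
  have hyne1 : (1:ℝ) - y ≠ 0 := by linarith
  field_simp
  ring

lemma pinsker_two_point {a b : ℝ} (ha : a ∈ Set.Ioo (0:ℝ) 1) (hb : b ∈ Set.Ioo (0:ℝ) 1) :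
    2*(a-b)^2 ≤ a * Real.log (a/b) + (1-a) * Real.log ((1-a)/(1-b)) := by
  obtain ⟨ha0, ha1⟩ := ha
  obtain ⟨hb0, hb1⟩ := hb
  set g : ℝ → ℝ := fun y => -(a * Real.log y) - (1-a) * Real.log (1-y) - 2*(a-y)^2 with hg
  have hderiv : ∀ y ∈ Set.Ioo (0:ℝ) 1, deriv g y = (y - a) * (1/(y*(1-y)) - 4) :=
    fun y hy => (pinsker_deriv a hy.1 hy.2).deriv
  have hcont : ∀ s : Set ℝ, s ⊆ Set.Ioo (0:ℝ) 1 → ContinuousOn g s := by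
    intro s hs
    intro y hy
    exact ((pinsker_deriv a (hs hy).1 (hs hy).2).differentiableAt.continuousAt).continuousWithinAt
  have hfac : ∀ y ∈ Set.Ioo (0:ℝ) 1, 0 ≤ 1/(y*(1-y)) - 4 := by
    intro y hy
    have hpos : 0 < y * (1-y) := mul_pos hy.1 (by linarith [hy.2])
    have h14 : y * (1-y) ≤ 1/4 := by nlinarith [sq_nonneg (y - 1/2)]
    have : (4:ℝ) ≤ 1/(y*(1-y)) := by
      rw [le_div_iff₀ hpos]; linarith
    linarith
  have key : g a ≤ g b := by
    rcases le_total a b with hab | hab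
    · have hmono : MonotoneOn g (Set.Icc a b) := by
        apply monotoneOn_of_deriv_nonneg (convex_Icc a b)
          (hcont _ (fun y hy => ⟨lt_of_lt_of_le ha0 hy.1, lt_of_le_of_lt hy.2 hb1⟩))
        · intro y hy
          rw [interior_Icc] at hy
          exact ((pinsker_deriv a (lt_trans ha0 hy.1) (lt_trans hy.2 hb1)).differentiableAt).differentiableWithinAt
        · intro y hy
          rw [interior_Icc] at hy
          rw [hderiv y ⟨lt_trans ha0 hy.1, lt_trans hy.2 hb1⟩]
          exact mul_nonneg (by linarith [hy.1]) (hfac y ⟨lt_trans ha0 hy.1, lt_trans hy.2 hb1⟩)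
      exact hmono (Set.left_mem_Icc.mpr hab) (Set.right_mem_Icc.mpr hab) hab
    · have hmono : AntitoneOn g (Set.Icc b a) := by
        apply antitoneOn_of_deriv_nonpos (convex_Icc b a)
          (hcont _ (fun y hy => ⟨lt_of_lt_of_le hb0 hy.1, lt_of_le_of_lt hy.2 ha1⟩))
        · intro y hy
          rw [interior_Icc] at hy
          exact ((pinsker_deriv a (lt_trans hb0 hy.1) (lt_trans hy.2 ha1)).differentiableAt).differentiableWithinAt
        · intro y hy
          rw [interior_Icc] at hy
          rw [hderiv y ⟨lt_trans hb0 hy.1, lt_trans hy.2 ha1⟩]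
          exact mul_nonpos_of_nonpos_of_nonneg (by linarith [hy.2]) (hfac y ⟨lt_trans hb0 hy.1, lt_trans hy.2 ha1⟩)
      exact hmono (Set.left_mem_Icc.mpr hab) (Set.right_mem_Icc.mpr hab) hab
  have key' := key
  rw [hg] at key'
  simp only at key'
  rw [Real.log_div ha0.ne' hb0.ne',
    Real.log_div (by linarith : (1:ℝ)-a ≠ 0) (by linarith : (1:ℝ)-b ≠ 0)]
  nlinarith [key']


lemma log_sum_ineq {ι : Type*} (s : Finset ι) (f h : ι → ℝ)
    (hf : ∀ i ∈ s, 0 < f i) (hh : ∀ i ∈ s, 0 < h i) (hs : s.Nonempty) :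
    (∑ i ∈ s, f i) * Real.log ((∑ i ∈ s, f i)/(∑ i ∈ s, h i))
      ≤ ∑ i ∈ s, f i * Real.log (f i / h i) := by
  have hF : 0 < ∑ i ∈ s, f i := Finset.sum_pos hf hs
  have hH : 0 < ∑ i ∈ s, h i := Finset.sum_pos hh hs
  have hjen := convexOn_mul_log.map_centerMass_le (t := s) (w := h) (p := fun i => f i / h i)
    (fun i hi => (hh i hi).le) hH
    (fun i hi => Set.mem_Ici.mpr (div_nonneg (hf i hi).le (hh i hi).le))
  simp only [Finset.centerMass, smul_eq_mul, Function.comp] at hjen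
  have e1 : ∑ i ∈ s, h i * (f i / h i) = ∑ i ∈ s, f i := by
    apply Finset.sum_congr rfl
    intro i hi
    field_simp [(hh i hi).ne']
  rw [e1] at hjen
  -- hjen : (∑h)⁻¹ * (∑ f) * log ((∑h)⁻¹ * ∑ f) ≤ (∑h)⁻¹ * ∑ (f i/h i * log (f i / h i))
  have e2 : ∑ i ∈ s, h i * (f i / h i * Real.log (f i / h i))
      = ∑ i ∈ s, f i * Real.log (f i / h i) := by
    apply Finset.sum_congr rfl
    intro i hi
    field_simp [(hh i hi).ne']
  rw [e2] at hjen
  have e3 : (∑ i ∈ s, h i)⁻¹ * (∑ i ∈ s, f i) = (∑ i ∈ s, f i) / (∑ i ∈ s, h i) := by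
    rw [div_eq_inv_mul]
  rw [e3] at hjen
  have hmul := mul_le_mul_of_nonneg_left hjen hH.le
  have lhs_eq : (∑ i ∈ s, h i) * ((∑ i ∈ s, f i) / (∑ i ∈ s, h i)
      * Real.log ((∑ i ∈ s, f i)/(∑ i ∈ s, h i)))
      = (∑ i ∈ s, f i) * Real.log ((∑ i ∈ s, f i)/(∑ i ∈ s, h i)) := by
    field_simp
  have rhs_eq : (∑ i ∈ s, h i) * ((∑ i ∈ s, h i)⁻¹ * ∑ i ∈ s, f i * Real.log (f i / h i))
      = ∑ i ∈ s, f i * Real.log (f i / h i) := by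
    field_simp
  rw [lhs_eq, rhs_eq] at hmul
  exact hmul

lemma pinsker_fin {ι : Type*} [Fintype ι] [DecidableEq ι] (f h : ι → ℝ)
    (hf : ∀ i, 0 < f i) (hh : ∀ i, 0 < h i)
    (hf1 : ∑ i, f i = 1) (hh1 : ∑ i, h i = 1) (A : Finset ι) :
    ∑ i ∈ A, f i - ∑ i ∈ A, h i
      ≤ Real.sqrt ((∑ i, f i * Real.log (f i / h i)) / 2) := by
  rcases A.eq_empty_or_nonempty with rfl | hA
  · rw [Finset.sum_empty, Finset.sum_empty, sub_zero]
    exact Real.sqrt_nonneg _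
  rcases (Aᶜ).eq_empty_or_nonempty with hAc | hAc
  · have : A = Finset.univ := by
      rwa [Finset.compl_eq_empty_iff] at hAc
    subst this
    rw [hf1, hh1, sub_self]
    exact Real.sqrt_nonneg _
  set a := ∑ i ∈ A, f i with hadef
  set b := ∑ i ∈ A, h i with hbdef
  have hsplitf : a + ∑ i ∈ Aᶜ, f i = 1 := by rw [hadef, Finset.sum_add_sum_compl, hf1]
  have hsplith : b + ∑ i ∈ Aᶜ, h i = 1 := by rw [hbdef, Finset.sum_add_sum_compl, hh1]
  have ha0 : 0 < a := Finset.sum_pos (fun i _ => hf i) hA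
  have hb0 : 0 < b := Finset.sum_pos (fun i _ => hh i) hA
  have hac : 0 < ∑ i ∈ Aᶜ, f i := Finset.sum_pos (fun i _ => hf i) hAc
  have hbc : 0 < ∑ i ∈ Aᶜ, h i := Finset.sum_pos (fun i _ => hh i) hAc
  have ha1 : a < 1 := by linarith
  have hb1 : b < 1 := by linarith
  have hfc : ∑ i ∈ Aᶜ, f i = 1 - a := by linarith
  have hhc : ∑ i ∈ Aᶜ, h i = 1 - b := by linarith
  have hkl : a * Real.log (a/b) + (1-a) * Real.log ((1-a)/(1-b))
      ≤ ∑ i, f i * Real.log (f i / h i) := by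
    rw [← Finset.sum_add_sum_compl A]
    have h1 := log_sum_ineq A f h (fun i _ => hf i) (fun i _ => hh i) hA
    have h2 := log_sum_ineq Aᶜ f h (fun i _ => hf i) (fun i _ => hh i) hAc
    rw [hfc, hhc] at h2
    exact add_le_add h1 h2
  have h2pt := pinsker_two_point ⟨ha0, ha1⟩ ⟨hb0, hb1⟩
  have hsq : (a - b)^2 ≤ (∑ i, f i * Real.log (f i / h i)) / 2 := by linarith
  calc a - b ≤ |a - b| := le_abs_self _
    _ = Real.sqrt ((a-b)^2) := (Real.sqrt_sq_eq_abs _).symm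
    _ ≤ _ := Real.sqrt_le_sqrt hsq


lemma meas_finset_eq_sum {Ω : Type*} [MeasurableSpace Ω] [MeasurableSingletonClass Ω]
    (μ : Measure Ω) (A : Finset Ω) : μ ↑A = ∑ g ∈ A, μ {g} := by
  rw [← measure_biUnion_finset (f := fun g => ({g} : Set Ω))]
  · congr 1
    ext x
    simp
  · intro i _ j _ hij
    simp [Function.onFun, Set.disjoint_singleton_left, hij]
  · exact fun g _ => measurableSet_singleton g

lemma meas_finset_toReal {Ω : Type*} [MeasurableSpace Ω] [MeasurableSingletonClass Ω]
    (μ : Measure Ω) [IsProbabilityMeasure μ] (A : Finset Ω) :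
    (μ ↑A).toReal = ∑ g ∈ A, (μ {g}).toReal := by
  rw [meas_finset_eq_sum, ENNReal.toReal_sum]
  exact fun g _ => (measure_lt_top μ _).ne


lemma pi_cylinder {ι : Type*} [Fintype ι] [DecidableEq ι] {α : Type*} [MeasurableSpace α]
    (μ : ι → Measure α) [∀ i, IsProbabilityMeasure (μ i)] (e : ι) (s : Set α)
    (hs : MeasurableSet s) :
    Measure.pi μ ((fun g : ι → α => g e) ⁻¹' s) = μ e s := by
  have hset : (fun g : ι → α => g e) ⁻¹' s
      = Set.pi Set.univ (Function.update (fun _ => (Set.univ : Set α)) e s) := by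
    ext g
    simp only [Set.mem_preimage, Set.mem_pi, Set.mem_univ, true_implies]
    constructor
    · intro hg k
      rcases eq_or_ne k e with rfl | hk
      · simpa using hg
      · simp [Function.update_of_ne hk]
    · intro hg
      have := hg e
      simpa using this
  rw [hset, Measure.pi_pi]
  rw [Finset.prod_eq_single e]
  · simp
  · intro k _ hk
    simp [Function.update_of_ne hk]
  · exact fun hh => absurd (Finset.mem_univ e) hh

lemma pi_map_pair {α : Type*} [MeasurableSpace α] (μ : Measure α) [IsProbabilityMeasure μ]
    {m : ℕ} (i j : Fin m) (hij : i ≠ j) :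
    Measure.map (fun X : Fin m → α => (X i, X j)) (Measure.pi fun _ => μ) = μ.prod μ := by
  have hmeas : Measurable (fun X : Fin m → α => (X i, X j)) :=
    (measurable_pi_apply i).prodMk (measurable_pi_apply j)
  refine (Measure.prod_eq fun s t hs ht => ?_).symm
  rw [Measure.map_apply hmeas (hs.prod ht)]
  have hset : (fun X : Fin m → α => (X i, X j)) ⁻¹' (s ×ˢ t)
      = Set.pi Set.univ (Function.update (Function.update (fun _ => (Set.univ : Set α)) i s) j t) := by
    ext X
    simp only [Set.mem_preimage, Set.mem_prod, Set.mem_pi, Set.mem_univ, true_implies]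
    constructor
    · rintro ⟨hXi, hXj⟩ k
      rcases eq_or_ne k j with rfl | hkj
      · simpa using hXj
      rcases eq_or_ne k i with rfl | hki
      · simp [Function.update_of_ne hkj, hij, hXi]
      · simp [Function.update_of_ne hkj, Function.update_of_ne hki]
    · intro h
      have h1 := h i
      have h2 := h j
      rw [Function.update_of_ne hij] at h1
      simp only [Function.update_self] at h1 h2
      exact ⟨h1, h2⟩
  rw [hset, Measure.pi_pi]
  rw [← Finset.mul_prod_erase Finset.univ _ (Finset.mem_univ j)]
  rw [← Finset.mul_prod_erase _ _ (Finset.mem_erase.mpr ⟨hij, Finset.mem_univ i⟩)]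
  rw [Function.update_self, Function.update_of_ne hij, Function.update_self]
  have : ∀ k ∈ (Finset.univ.erase j).erase i,
      μ (Function.update (Function.update (fun _ => (Set.univ : Set α)) i s) j t k) = 1 := by
    intro k hk
    have hki : k ≠ i := (Finset.mem_erase.mp hk).1
    have hkj : k ≠ j := (Finset.mem_erase.mp (Finset.mem_erase.mp hk).2).1
    simp [Function.update_of_ne hkj, Function.update_of_ne hki]
  rw [Finset.prod_congr rfl this]
  simp [mul_comm]

lemma integral_ite_mem {α : Type*} [MeasurableSpace α] (μ : Measure α) [IsProbabilityMeasure μ]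
    (P : α → Prop) [DecidablePred P] (hP : MeasurableSet {x | P x}) (A B : ℝ) :
    ∫ x, (if P x then A else B) ∂μ
      = A * (μ {x | P x}).toReal + B * (1 - (μ {x | P x}).toReal) := by
  have hfun : (fun x => if P x then A else B)
      = fun x => Set.indicator {x | P x} (fun _ => A - B) x + B := by
    funext x
    by_cases hx : P x
    · simp [Set.indicator_of_mem, hx]
    · simp [Set.indicator_of_notMem, hx]
  rw [hfun, integral_add ((integrable_const (A-B)).indicator hP) (integrable_const B),
    integral_indicator_const _ hP, integral_const]
  simp only [smul_eq_mul, measureReal_def, measure_univ, ENNReal.toReal_one, one_smul]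
  ring
lemma integrable_ite_mem {α : Type*} [MeasurableSpace α] (μ : Measure α) [IsProbabilityMeasure μ]
    (P : α → Prop) [DecidablePred P] (hP : MeasurableSet {x | P x}) (A B : ℝ) :
    Integrable (fun x => if P x then A else B) μ := by
  have hfun : (fun x => if P x then A else B)
      = fun x => Set.indicator {x | P x} (fun _ => A - B) x + B := by
    funext x
    by_cases hx : P x
    · simp [Set.indicator_of_mem, hx]
    · simp [Set.indicator_of_notMem, hx]
  rw [hfun]
  exact ((integrable_const (A-B)).indicator hP).add (integrable_const B)

lemma aux_log_lb_scaled {u v : ℝ} (hu : 0 < u) (hv : 0 ≤ v) :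
    u*v - v^2 ≤ u^2 * (Real.log (u+v) - Real.log u) := by
  have h := aux_log_lb (div_nonneg hv hu.le)
  have he : Real.log (u+v) - Real.log u = Real.log (1 + v/u) := by
    rw [← Real.log_div (by linarith) hu.ne']
    congr 1
    field_simp
  rw [he]
  calc u*v - v^2 = u^2 * (v/u - (v/u)^2) := by field_simp
    _ ≤ u^2 * Real.log (1 + v/u) := mul_le_mul_of_nonneg_left h (sq_nonneg u)

lemma edge_kl_bound {p q : ℝ} (hp0 : 0 < p) (hp1 : p < 1) (hq0 : 0 ≤ q) (hq : q ≤ 1/2) :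
    p * (Real.log p - (p * Real.log ((1-q)*p + q) + (1-p) * Real.log ((1-q)*p)))
      + (1-p) * (Real.log (1-p)
        - (p * Real.log (1 - ((1-q)*p + q)) + (1-p) * Real.log (1 - (1-q)*p)))
      ≤ q^2 := by
  have hq1 : q < 1 := by linarith
  have hb1 : p*(q*(1-p)) - (q*(1-p))^2
      ≤ p^2 * (Real.log (p + q*(1-p)) - Real.log p) :=
    aux_log_lb_scaled hp0 (mul_nonneg hq0 (by linarith))
  have hb2 : (1-p)*(q*p) - (q*p)^2
      ≤ (1-p)^2 * (Real.log ((1-p) + q*p) - Real.log (1-p)) :=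
    aux_log_lb_scaled (by linarith) (mul_nonneg hq0 hp0.le)
  have hb3 : -Real.log (1-q) ≤ q + q^2 := aux_neg_log hq0 hq
  have hc3 : (2*(p*(1-p))) * (-Real.log (1-q)) ≤ (2*(p*(1-p))) * (q + q^2) :=
    mul_le_mul_of_nonneg_left hb3 (by nlinarith)
  have hl0 : Real.log ((1-q)*p) = Real.log p + Real.log (1-q) := by
    rw [show (1-q)*p = p * (1-q) by ring, Real.log_mul hp0.ne' (by linarith : (1:ℝ)-q ≠ 0)]
  have hl1 : Real.log (1 - ((1-q)*p + q)) = Real.log (1-p) + Real.log (1-q) := by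
    rw [show (1:ℝ) - ((1-q)*p + q) = (1-p) * (1-q) by ring,
      Real.log_mul (by linarith : (1:ℝ)-p ≠ 0) (by linarith : (1:ℝ)-q ≠ 0)]
  have hA1 : (1-q)*p + q = p + q*(1-p) := by ring
  have hA0' : 1 - (1-q)*p = (1-p) + q*p := by ring
  rw [hl0, hl1, hA1, hA0']
  nlinarith [hb1, hb2, hc3]


end AuxLemmas

/-- The uniform probability measure on the unit sphere `S^{d−1} ⊂ ℝ^d`. -/
noncomputable def uniformSphere (d : ℕ) : Measure (Fin d → ℝ) :=
  (Measure.pi fun _ : Fin d => gaussianReal 0 1).map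
    fun z => (Real.sqrt (∑ i, z i ^ 2))⁻¹ • z

/-- The Bernoulli measure on `Bool` with success probability `r` (clipped to `[0,1]`). -/
noncomputable def bern (r : ℝ) : Measure Bool :=
  (PMF.bernoulli (min 1 (Real.toNNReal r)) (min_le_left _ _)).toMeasure

/-- Index type for the potential edges of a graph on `n` vertices. -/
abbrev EdgeIdx (n : ℕ) := {e : Fin n × Fin n // e.1 < e.2}

/-- The Erdős–Rényi random graph `G(n,p)`: each edge appears independently with
probability `p`. -/
noncomputable def erdosRenyi (n : ℕ) (p : ℝ) : Measure (EdgeIdx n → Bool) :=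
  Measure.pi fun _ : EdgeIdx n => bern p

/-- The noisy random geometric graph `G(n,p,d,q)`: latent points `x₁, …, xₙ` are i.i.d.
uniform on `S^{d−1}`, and conditionally on them each edge `{i,j}` appears independently
with probability `(1−q)p + q·1{⟨x_i,x_j⟩ ≥ t}`. -/
noncomputable def noisyRGG (n d : ℕ) (p q t : ℝ) : Measure (EdgeIdx n → Bool) :=
  (Measure.pi fun _ : Fin n => uniformSphere d).bind fun X =>
    Measure.pi fun e : EdgeIdx n =>
      bern ((1 - q) * p + q * (if t ≤ ∑ i, X e.1.1 i * X e.1.2 i then 1 else 0))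

/-- The total variation distance `sup_A |P(A) − Q(A)|` between two measures. -/
noncomputable def tvDist {Ω : Type*} [MeasurableSpace Ω] (P Q : Measure Ω) : ℝ :=
  ⨆ A : {A : Set Ω // MeasurableSet A}, |(P A).toReal - (Q A).toReal|

instance bern_prob (r : ℝ) : IsProbabilityMeasure (bern r) :=
  PMF.toMeasure.isProbabilityMeasure _

lemma bern_true {r : ℝ} (h0 : 0 ≤ r) (h1 : r ≤ 1) :
    bern r {true} = ENNReal.ofReal r := by
  rw [bern, PMF.toMeasure_apply_singleton _ _ (measurableSet_singleton _),
    PMF.bernoulli_apply]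
  simp [min_eq_right (Real.toNNReal_le_one.mpr h1)]
  rfl

lemma bern_false {r : ℝ} (h0 : 0 ≤ r) (h1 : r ≤ 1) :
    bern r {false} = ENNReal.ofReal (1 - r) := by
  rw [bern, PMF.toMeasure_apply_singleton _ _ (measurableSet_singleton _),
    PMF.bernoulli_apply]
  simp only [Bool.cond_false, min_eq_right (Real.toNNReal_le_one.mpr h1)]
  rw [ENNReal.coe_sub, ENNReal.coe_one, ENNReal.ofReal_sub _ h0, ENNReal.ofReal_one]
  rfl

set_option maxHeartbeats 2000000 in
/-- For fixed `p ∈ (0,1)`, `d ≥ 1` and `0 ≤ q ≤ 1/2`, with the threshold `t = t_{p,d}`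
defined by `P(⟨x₁,x₂⟩ ≥ t) = p`, we have `TV(G(n,p), G(n,p,d,q)) ≤ nq/2`. -/
theorem tv_erdosRenyi_noisyRGG_le (n d : ℕ) (hd : 1 ≤ d) (p q t : ℝ)
    (hp : p ∈ Set.Ioo (0 : ℝ) 1) (hq0 : 0 ≤ q) (hq : q ≤ 1 / 2)
    (ht : ((uniformSphere d).prod (uniformSphere d)) {x | t ≤ ∑ i, x.1 i * x.2 i}
      = ENNReal.ofReal p) :
    tvDist (erdosRenyi n p) (noisyRGG n d p q t) ≤ n * q / 2 := by
  classical
  obtain ⟨hp0, hp1⟩ := hp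
  have hq1 : q < 1 := by linarith
  -- abbreviations
  set V := (Fin n → Fin d → ℝ) with hV
  set Ω := (EdgeIdx n → Bool) with hΩ
  set μn : Measure V := Measure.pi fun _ : Fin n => uniformSphere d with hμn
  set r : V → EdgeIdx n → ℝ :=
    fun X e => (1 - q) * p + q * (if t ≤ ∑ i, X e.1.1 i * X e.1.2 i then 1 else 0) with hrdef
  set κ : V → Measure Ω := fun X => Measure.pi fun e : EdgeIdx n => bern (r X e) with hκdef
  have hRGG : noisyRGG n d p q t = μn.bind κ := rfl
  set A1 : ℝ := (1-q)*p + q with hA1def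
  set A0 : ℝ := (1-q)*p with hA0def
  have hA0pos : 0 < A0 := by rw [hA0def]; nlinarith
  have hA0leA1 : A0 ≤ A1 := by rw [hA0def, hA1def]; linarith
  have hA1lt1 : A1 < 1 := by rw [hA1def]; nlinarith
  have hA0lt1 : A0 < 1 := lt_of_le_of_lt hA0leA1 hA1lt1
  have hr_eq : ∀ X e, r X e = if t ≤ ∑ i, X e.1.1 i * X e.1.2 i then A1 else A0 := by
    intro X e
    rw [hrdef]
    simp only
    split <;> [rw [hA1def]; rw [hA0def]] <;> ring
  have hr0 : ∀ X e, 0 < r X e := by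
    intro X e; rw [hr_eq]; split <;> [exact lt_of_lt_of_le hA0pos hA0leA1; exact hA0pos]
  have hr1 : ∀ X e, r X e < 1 := by
    intro X e; rw [hr_eq]; split <;> [exact hA1lt1; exact hA0lt1]
  -- probability instances
  have hsphere_meas : Measurable (fun z : Fin d → ℝ => (Real.sqrt (∑ i, z i ^ 2))⁻¹ • z) := by
    exact Measurable.smul (Measurable.sqrt (Finset.measurable_sum _ fun i _ => (measurable_pi_apply i).pow_const 2)).inv measurable_id
  haveI hunif_prob : IsProbabilityMeasure (uniformSphere d) := by
    rw [uniformSphere]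
    exact Measure.isProbabilityMeasure_map hsphere_meas.aemeasurable
  haveI : IsProbabilityMeasure μn := by rw [hμn]; infer_instance
  haveI hκprob : ∀ X, IsProbabilityMeasure (κ X) := fun X => by rw [hκdef]; infer_instance
  haveI : IsProbabilityMeasure (erdosRenyi n p) := by rw [erdosRenyi]; infer_instance
  -- measurability of basic functions
  have hSmeas : ∀ e : EdgeIdx n, MeasurableSet {X : V | t ≤ ∑ i, X e.1.1 i * X e.1.2 i} := by
    intro e
    apply measurableSet_le measurable_const
    exact Finset.measurable_sum _ fun i _ => by fun_prop
  have hrmeas : ∀ e, Measurable fun X => r X e := by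
    intro e
    have : (fun X => r X e) = fun X => if t ≤ ∑ i, X e.1.1 i * X e.1.2 i then A1 else A0 := by
      funext X; exact hr_eq X e
    rw [this]
    exact Measurable.ite (hSmeas e) measurable_const measurable_const
  -- values of bern at singletons
  have hbern_val : ∀ X e (b : Bool),
      bern (r X e) {b} = ENNReal.ofReal (if b then r X e else 1 - r X e) := by
    intro X e b
    cases b
    · exact bern_false (hr0 X e).le (hr1 X e).le
    · exact bern_true (hr0 X e).le (hr1 X e).le
  -- the conditional density w
  set w : Ω → V → ℝ := fun g X => ∏ e, (if g e then r X e else 1 - r X e) with hwdef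
  have hwfac_pos : ∀ (g : Ω) X e, 0 < (if g e then r X e else 1 - r X e) := by
    intro g X e
    split
    · exact hr0 X e
    · linarith [hr1 X e]
  have hwfac_le1 : ∀ (g : Ω) X e, (if g e then r X e else 1 - r X e) ≤ 1 := by
    intro g X e
    split
    · linarith [hr1 X e]
    · linarith [hr0 X e]
  set m0 : ℝ := min A0 (1 - A1) with hm0def
  have hm0pos : 0 < m0 := lt_min hA0pos (by linarith)
  have hwfac_ge : ∀ (g : Ω) X e, m0 ≤ (if g e then r X e else 1 - r X e) := by
    intro g X e
    rcases le_total ((if g e then r X e else 1 - r X e)) 0 with _ | _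
    all_goals {
      split
      · rw [hr_eq]
        split
        · exact le_trans (min_le_left _ _) (le_trans hA0leA1 le_rfl)
        · exact min_le_left _ _
      · rw [hr_eq]
        split
        · exact min_le_right _ _
        · exact le_trans (min_le_right _ _) (by linarith [hA0leA1]) }
  set c : ℝ := m0 ^ (Fintype.card (EdgeIdx n)) with hcdef
  have hcpos : 0 < c := pow_pos hm0pos _
  have hw_ge : ∀ (g : Ω) X, c ≤ w g X := by
    intro g X
    rw [hcdef, hwdef, ← Finset.card_univ, ← Finset.prod_const]
    exact Finset.prod_le_prod (fun e _ => hm0pos.le) (fun e _ => hwfac_ge g X e)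
  have hw_le : ∀ (g : Ω) X, w g X ≤ 1 :=
    fun g X => Finset.prod_le_one (fun e _ => (hwfac_pos g X e).le) (fun e _ => hwfac_le1 g X e)
  have hw_pos : ∀ (g : Ω) X, 0 < w g X := fun g X => lt_of_lt_of_le hcpos (hw_ge g X)
  have hwmeas : ∀ g : Ω, Measurable (w g) := by
    intro g
    apply Finset.measurable_prod
    intro e _
    cases hge : g e
    · simp only [hge, Bool.false_eq_true, if_false]
      exact measurable_const.sub (hrmeas e)
    · simp only [hge, if_true]
      exact hrmeas e
  have hwint : ∀ g : Ω, Integrable (w g) μn := by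
    intro g
    refine (integrable_const (1:ℝ)).mono' (hwmeas g).aestronglyMeasurable ?_
    exact ae_of_all _ fun X => by
      rw [Real.norm_eq_abs, abs_of_pos (hw_pos g X)]; exact hw_le g X
  -- singleton values of the kernel and noisyRGG
  have hκ_singleton : ∀ X (g : Ω), κ X {g} = ENNReal.ofReal (w g X) := by
    intro X g
    rw [hκdef]
    simp only
    rw [← Set.univ_pi_singleton g, Measure.pi_pi]
    rw [hwdef]
    simp only
    rw [ENNReal.ofReal_prod_of_nonneg (fun e _ => (hwfac_pos g X e).le)]
    exact Finset.prod_congr rfl fun e _ => hbern_val X e (g e)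
  have hκmeas : Measurable κ := by
    apply Measure.measurable_of_measurable_coe
    intro s _
    have hs' : s = ↑(Set.toFinite s).toFinset := (Set.Finite.coe_toFinset _).symm
    rw [hs']
    have : (fun X => κ X ↑(Set.toFinite s).toFinset)
        = fun X => ∑ g ∈ (Set.toFinite s).toFinset, ENNReal.ofReal (w g X) := by
      funext X
      rw [meas_finset_eq_sum]
      exact Finset.sum_congr rfl fun g _ => hκ_singleton X g
    rw [this]
    exact Finset.measurable_sum _ fun g _ => (hwmeas g).ennreal_ofReal
  set h : Ω → ℝ := fun g => ∫ X, w g X ∂μn with hhdef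
  have hh_ge : ∀ g : Ω, c ≤ h g := by
    intro g
    rw [hhdef]
    simp only
    calc c = ∫ _ : V, c ∂μn := by rw [integral_const]; simp
      _ ≤ _ := integral_mono (integrable_const c) (hwint g) (fun X => hw_ge g X)
  have hh_pos : ∀ g : Ω, 0 < h g := fun g => lt_of_lt_of_le hcpos (hh_ge g)
  have hQ_singleton : ∀ g : Ω, noisyRGG n d p q t {g} = ENNReal.ofReal (h g) := by
    intro g
    rw [hRGG, Measure.bind_apply (measurableSet_singleton g) hκmeas.aemeasurable]
    have : (fun X => κ X {g}) = fun X => ENNReal.ofReal (w g X) := funext fun X => hκ_singleton X g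
    rw [this, hhdef, ← ofReal_integral_eq_lintegral_ofReal (hwint g)
      (ae_of_all _ fun X => (hw_pos g X).le)]
  haveI hQprob : IsProbabilityMeasure (noisyRGG n d p q t) := by
    constructor
    rw [hRGG, Measure.bind_apply MeasurableSet.univ hκmeas.aemeasurable]
    simp only [measure_univ]
    simp
  -- singleton values of erdosRenyi
  set f : Ω → ℝ := fun g => ∏ e, (if g e then p else 1-p) with hfdef
  have hffac_pos : ∀ (g : Ω) e, 0 < (if g e then p else 1-p) := by
    intro g e; split <;> linarith
  have hf_pos : ∀ g : Ω, 0 < f g := fun g => Finset.prod_pos fun e _ => hffac_pos g e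
  have hP_singleton : ∀ g : Ω, erdosRenyi n p {g} = ENNReal.ofReal (f g) := by
    intro g
    rw [erdosRenyi, ← Set.univ_pi_singleton g, Measure.pi_pi, hfdef]
    simp only
    rw [ENNReal.ofReal_prod_of_nonneg (fun e _ => (hffac_pos g e).le)]
    refine Finset.prod_congr rfl fun e _ => ?_
    cases hge : g e
    · simp only [Bool.false_eq_true, if_false]
      exact bern_false hp0.le hp1.le
    · simp only [if_true]
      exact bern_true hp0.le hp1.le
  -- sums to one
  have hf_toReal : ∀ g : Ω, (erdosRenyi n p {g}).toReal = f g := by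
    intro g; rw [hP_singleton g, ENNReal.toReal_ofReal (hf_pos g).le]
  have hh_toReal : ∀ g : Ω, (noisyRGG n d p q t {g}).toReal = h g := by
    intro g; rw [hQ_singleton g, ENNReal.toReal_ofReal (hh_pos g).le]
  have hsum_f : ∑ g : Ω, f g = 1 := by
    have := meas_finset_toReal (erdosRenyi n p) Finset.univ
    rw [Finset.coe_univ] at this
    simp only [measure_univ, ENNReal.toReal_one] at this
    calc ∑ g : Ω, f g = ∑ g : Ω, ((erdosRenyi n p) {g}).toReal :=
          Finset.sum_congr rfl (fun g _ => (hf_toReal g).symm)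
      _ = 1 := this.symm
  have hsum_h : ∑ g : Ω, h g = 1 := by
    have := meas_finset_toReal (noisyRGG n d p q t) Finset.univ
    rw [Finset.coe_univ] at this
    simp only [measure_univ, ENNReal.toReal_one] at this
    calc ∑ g : Ω, h g = ∑ g : Ω, ((noisyRGG n d p q t) {g}).toReal :=
          Finset.sum_congr rfl (fun g _ => (hh_toReal g).symm)
      _ = 1 := this.symm
    -- marginals of f
  have hmarg_f : ∀ (e : EdgeIdx n) (b : Bool),
      ∑ g ∈ Finset.univ.filter (fun g : Ω => g e = b), f g = (if b then p else 1-p) := by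
    intro e b
    have hcoe : ↑(Finset.univ.filter (fun g : Ω => g e = b)) = ((fun g : Ω => g e) ⁻¹' {b}) := by
      ext g; simp
    have h1 : (erdosRenyi n p) ((fun g : Ω => g e) ⁻¹' {b}) = bern p {b} := by
      rw [erdosRenyi]
      exact pi_cylinder (fun _ => bern p) e {b} (measurableSet_singleton b)
    have h2 : bern p {b} = ENNReal.ofReal (if b then p else 1-p) := by
      cases b
      · exact bern_false hp0.le hp1.le
      · exact bern_true hp0.le hp1.le
    have h3 := meas_finset_toReal (erdosRenyi n p) (Finset.univ.filter (fun g : Ω => g e = b))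
    rw [hcoe, h1, h2, ENNReal.toReal_ofReal (by split <;> linarith)] at h3
    calc ∑ g ∈ Finset.univ.filter (fun g : Ω => g e = b), f g
        = ∑ g ∈ Finset.univ.filter (fun g : Ω => g e = b), ((erdosRenyi n p) {g}).toReal :=
          Finset.sum_congr rfl fun g _ => (hf_toReal g).symm
      _ = (if b then p else 1-p) := h3.symm
  -- the latent set has measure p
  have hS2meas : MeasurableSet {x : (Fin d → ℝ) × (Fin d → ℝ) | t ≤ ∑ i, x.1 i * x.2 i} := by
    apply measurableSet_le measurable_const
    exact Finset.measurable_sum _ fun i _ =>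
      ((measurable_pi_apply i).comp measurable_fst).mul
      ((measurable_pi_apply i).comp measurable_snd)
  have hmarg_S : ∀ e : EdgeIdx n, (μn {X : V | t ≤ ∑ i, X e.1.1 i * X e.1.2 i}).toReal = p := by
    intro e
    have hij : e.1.1 ≠ e.1.2 := ne_of_lt e.2
    have hpair_meas : Measurable (fun X : V => (X e.1.1, X e.1.2)) :=
      (measurable_pi_apply _).prodMk (measurable_pi_apply _)
    have heq : μn {X : V | t ≤ ∑ i, X e.1.1 i * X e.1.2 i}
        = ((uniformSphere d).prod (uniformSphere d)) {x | t ≤ ∑ i, x.1 i * x.2 i} := by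
      rw [hμn, ← pi_map_pair (uniformSphere d) e.1.1 e.1.2 hij,
        Measure.map_apply hpair_meas hS2meas]
      rfl
    rw [heq, ht, ENNReal.toReal_ofReal hp0.le]
  -- per-edge expected log-likelihood
  set L : Bool → ℝ := fun b => if b then p * Real.log A1 + (1-p) * Real.log A0
      else p * Real.log (1-A1) + (1-p) * Real.log (1-A0) with hLdef
  -- Jensen's inequality
  have hJensen : ∀ g : Ω, ∑ e : EdgeIdx n, L (g e) ≤ Real.log (h g) := by
    intro g
    have hfactor : ∀ e : EdgeIdx n, (fun X : V => Real.log (if g e then r X e else 1 - r X e))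
        = fun X : V => if t ≤ ∑ i, X e.1.1 i * X e.1.2 i
            then (if g e then Real.log A1 else Real.log (1-A1))
            else (if g e then Real.log A0 else Real.log (1-A0)) := by
      intro e
      funext X
      rw [hr_eq X e]
      by_cases hc : t ≤ ∑ i, X e.1.1 i * X e.1.2 i <;> cases hge : g e <;> simp [hc, hge]
    have hint_fac : ∀ e : EdgeIdx n,
        Integrable (fun X : V => Real.log (if g e then r X e else 1 - r X e)) μn := by
      intro e
      rw [hfactor e]
      exact integrable_ite_mem μn _ (hSmeas e) _ _
    have hval_fac : ∀ e : EdgeIdx n,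
        ∫ X, Real.log (if g e then r X e else 1 - r X e) ∂μn = L (g e) := by
      intro e
      rw [hfactor e, integral_ite_mem μn _ (hSmeas e) _ _, hmarg_S e]
      cases hge : g e <;> simp only [hLdef, hge, Bool.false_eq_true, if_true, if_false] <;> ring
    have hlogw : ∀ X, Real.log (w g X) = ∑ e, Real.log (if g e then r X e else 1 - r X e) := by
      intro X
      rw [hwdef]
      exact Real.log_prod (fun e _ => (hwfac_pos g X e).ne')
    have hint_logw : Integrable (fun X => Real.log (w g X)) μn := by
      rw [show (fun X => Real.log (w g X))
          = fun X => ∑ e, Real.log (if g e then r X e else 1 - r X e) from funext hlogw]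
      exact integrable_finset_sum _ (fun e _ => hint_fac e)
    have hconcave : ConcaveOn ℝ (Set.Icc c 1) Real.log :=
      (strictConcaveOn_log_Ioi.concaveOn).subset
        (fun x hx => lt_of_lt_of_le hcpos hx.1) (convex_Icc c 1)
    have hcont : ContinuousOn Real.log (Set.Icc c 1) :=
      Real.continuousOn_log.mono (fun x hx => by
        simp only [Set.mem_compl_iff, Set.mem_singleton_iff]
        exact ne_of_gt (lt_of_lt_of_le hcpos hx.1))
    have hJ := hconcave.le_map_integral hcont isClosed_Icc
      (ae_of_all _ fun X => Set.mem_Icc.mpr ⟨hw_ge g X, hw_le g X⟩) (hwint g) hint_logw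
    calc ∑ e : EdgeIdx n, L (g e)
        = ∑ e : EdgeIdx n, ∫ X, Real.log (if g e then r X e else 1 - r X e) ∂μn :=
          Finset.sum_congr rfl fun e _ => (hval_fac e).symm
      _ = ∫ X, ∑ e : EdgeIdx n, Real.log (if g e then r X e else 1 - r X e) ∂μn :=
          (integral_finset_sum _ (fun e _ => hint_fac e)).symm
      _ = ∫ X, Real.log (w g X) ∂μn := by
          refine integral_congr_ae (ae_of_all _ fun X => ?_)
          exact (hlogw X).symm
      _ ≤ Real.log (h g) := hJ
  -- the KL divergence bound
  set M : Bool → ℝ := fun b => Real.log (if b then p else 1-p) with hMdef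
  have hlogf : ∀ g : Ω, Real.log (f g) = ∑ e, M (g e) := by
    intro g
    rw [hfdef]
    exact Real.log_prod (fun e _ => (hffac_pos g e).ne')
  have hKL : ∑ g : Ω, f g * Real.log (f g / h g) ≤ (Fintype.card (EdgeIdx n) : ℝ) * q^2 := by
    have step1 : ∀ g : Ω, f g * Real.log (f g / h g) ≤ f g * ∑ e, (M (g e) - L (g e)) := by
      intro g
      apply mul_le_mul_of_nonneg_left _ (hf_pos g).le
      rw [Real.log_div (hf_pos g).ne' (hh_pos g).ne', hlogf g, Finset.sum_sub_distrib]
      exact sub_le_sub_left (hJensen g) _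
    have step2 : ∀ e : EdgeIdx n, ∑ g : Ω, f g * (M (g e) - L (g e)) ≤ q^2 := by
      intro e
      rw [← Finset.sum_filter_add_sum_filter_not Finset.univ (fun g : Ω => g e = true)]
      have e1 : ∑ g ∈ Finset.univ.filter (fun g : Ω => g e = true), f g * (M (g e) - L (g e))
          = (M true - L true) * p := by
        rw [show ∑ g ∈ Finset.univ.filter (fun g : Ω => g e = true), f g * (M (g e) - L (g e))
            = ∑ g ∈ Finset.univ.filter (fun g : Ω => g e = true), f g * (M true - L true) from
          Finset.sum_congr rfl fun g hg => by
            rw [(Finset.mem_filter.mp hg).2]]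
        rw [← Finset.sum_mul, hmarg_f e true,
          show (if (true:Bool) = true then p else 1-p) = p from rfl]
        ring
      have hpredeq : (fun g : Ω => ¬ g e = true) = fun g : Ω => g e = false := by
        funext g
        simp [Bool.not_eq_true]
      have e2 : ∑ g ∈ Finset.univ.filter (fun g : Ω => ¬ g e = true), f g * (M (g e) - L (g e))
          = (M false - L false) * (1-p) := by
        rw [show Finset.univ.filter (fun g : Ω => ¬ g e = true)
            = Finset.univ.filter (fun g : Ω => g e = false) from
          Finset.filter_congr fun g _ => by simp [Bool.not_eq_true]]
        rw [show ∑ g ∈ Finset.univ.filter (fun g : Ω => g e = false), f g * (M (g e) - L (g e))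
            = ∑ g ∈ Finset.univ.filter (fun g : Ω => g e = false), f g * (M false - L false) from
          Finset.sum_congr rfl fun g hg => by
            rw [(Finset.mem_filter.mp hg).2]]
        rw [← Finset.sum_mul, hmarg_f e false,
          show (if (false:Bool) = true then p else 1-p) = 1-p from rfl]
        ring
      rw [e1, e2]
      have hMt : M true = Real.log p := by rw [hMdef]; simp
      have hMf : M false = Real.log (1-p) := by rw [hMdef]; simp
      have hLt : L true = p * Real.log A1 + (1-p) * Real.log A0 := by rw [hLdef]; simp
      have hLf : L false = p * Real.log (1-A1) + (1-p) * Real.log (1-A0) := by rw [hLdef]; simp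
      rw [hMt, hMf, hLt, hLf, hA1def, hA0def]
      have := edge_kl_bound hp0 hp1 hq0 hq
      linarith [this]
    calc ∑ g : Ω, f g * Real.log (f g / h g)
        ≤ ∑ g : Ω, f g * ∑ e, (M (g e) - L (g e)) := Finset.sum_le_sum fun g _ => step1 g
      _ = ∑ g : Ω, ∑ e, f g * (M (g e) - L (g e)) := by
          refine Finset.sum_congr rfl fun g _ => ?_
          rw [Finset.mul_sum]
      _ = ∑ e : EdgeIdx n, ∑ g : Ω, f g * (M (g e) - L (g e)) := Finset.sum_comm
      _ ≤ ∑ _e : EdgeIdx n, q^2 := Finset.sum_le_sum fun e _ => step2 e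
      _ = (Fintype.card (EdgeIdx n) : ℝ) * q^2 := by
          rw [Finset.sum_const, Finset.card_univ, nsmul_eq_mul]
  -- cardinality bound
  have hcard : 2 * (Fintype.card (EdgeIdx n)) ≤ n * n := by
    have h1 : Fintype.card (EdgeIdx n)
        = (Finset.univ.filter (fun e : Fin n × Fin n => e.1 < e.2)).card :=
      Fintype.card_subtype _
    have h2 : (Finset.univ.filter (fun e : Fin n × Fin n => e.1 < e.2)).card
        = (Finset.univ.filter (fun e : Fin n × Fin n => e.2 < e.1)).card := by
      apply Finset.card_nbij (fun e => (e.2, e.1))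
      · intro e he
        simp only [Finset.mem_filter, Finset.mem_univ, true_and] at he ⊢
        simpa using he
      · intro e1 h1 e2 h2 hEq
        simp only [Prod.mk.injEq] at hEq
        exact Prod.ext hEq.2 hEq.1
      · intro e he
        simp only [Finset.coe_filter, Set.mem_setOf_eq, Finset.mem_univ, true_and,
          Set.mem_image] at he ⊢
        exact ⟨(e.2, e.1), he, rfl⟩
    have h3 : (Finset.univ.filter (fun e : Fin n × Fin n => e.2 < e.1)).card
        ≤ (Finset.univ.filter (fun e : Fin n × Fin n => ¬ e.1 < e.2)).card := by
      apply Finset.card_le_card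
      apply Finset.monotone_filter_right
      intro e _ he
      exact not_lt_of_gt he
    have h4 := Finset.card_filter_add_card_filter_not
      (s := (Finset.univ : Finset (Fin n × Fin n))) (p := fun e => e.1 < e.2)
    have h5 : (Finset.univ : Finset (Fin n × Fin n)).card = n * n := by simp
    omega
  -- final assembly
  rw [tvDist]
  haveI hNE : Nonempty {A : Set Ω // MeasurableSet A} := ⟨⟨∅, MeasurableSet.empty⟩⟩
  apply ciSup_le
  rintro ⟨A, hA⟩
  simp only
  set A' : Finset Ω := (Set.toFinite A).toFinset with hA'def
  have hcoeA : ↑A' = A := Set.Finite.coe_toFinset _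
  have hPA : ((erdosRenyi n p) A).toReal = ∑ g ∈ A', f g := by
    rw [← hcoeA, meas_finset_toReal]
    exact Finset.sum_congr rfl fun g _ => hf_toReal g
  have hQA : ((noisyRGG n d p q t) A).toReal = ∑ g ∈ A', h g := by
    rw [← hcoeA, meas_finset_toReal]
    exact Finset.sum_congr rfl fun g _ => hh_toReal g
  rw [hPA, hQA]
  have hbound : Real.sqrt ((∑ g : Ω, f g * Real.log (f g / h g)) / 2) ≤ n * q / 2 := by
    have hcast : (2 * Fintype.card (EdgeIdx n) : ℝ) ≤ (n:ℝ) * n := by exact_mod_cast hcard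
    have h1 : (∑ g : Ω, f g * Real.log (f g / h g)) / 2 ≤ (n * q / 2)^2 := by
      nlinarith [hKL, sq_nonneg q, mul_nonneg (sq_nonneg q) (Nat.cast_nonneg (Fintype.card (EdgeIdx n)))]
    calc Real.sqrt ((∑ g : Ω, f g * Real.log (f g / h g)) / 2)
        ≤ Real.sqrt ((n * q / 2)^2) := Real.sqrt_le_sqrt h1
      _ = n * q / 2 := Real.sqrt_sq (by
          have : (0:ℝ) ≤ (n:ℝ) * q := mul_nonneg (Nat.cast_nonneg n) hq0
          linarith)
  rw [abs_sub_le_iff]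
  constructor
  · exact le_trans (pinsker_fin f h hf_pos hh_pos hsum_f hsum_h A') hbound
  · have hf' := Finset.sum_add_sum_compl A' f
    have hh' := Finset.sum_add_sum_compl A' h
    rw [hsum_f] at hf'
    rw [hsum_h] at hh'
    have hswap : ∑ g ∈ A', h g - ∑ g ∈ A', f g = ∑ g ∈ A'ᶜ, f g - ∑ g ∈ A'ᶜ, h g := by
      linarith
    rw [hswap]
    exact le_trans (pinsker_fin f h hf_pos hh_pos hsum_f hsum_h A'ᶜ) hbound
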